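/- Let m ≥ 3 be an integer and r a real number with 0 < r < π/(2√2). Put α = 2√2·cot(2√2·r), β = √2·cot(√2·r), λ = −√2·tan(√2·r), h = α + 2β + (2m−2)λ, δ = 4m + h·α − α², σ = 4m + 6 + h·β − β², and τ = 4m + 6 + h·λ − λ². Then it is impossible that both δ = σ and τ = δ hold. -/

import Mathlib

/-- Computational content of Corollary 2: for a Type (A) tube the Ricci
eigenvalue conditions `δ = σ` and `τ = δ` cannot both hold. -/
theorem typeA_no_coinciding_Ricci_eigenvalues (m : ℕ) (hm : 3 ≤ m)
    (r : ℝ) (hr0 : 0 < r) (hr1 : r < Real.pi / (2 * Real.sqrt 2))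
    (α β lam h δ σ τ : ℝ)
    (hα : α = 2 * Real.sqrt 2 * Real.cot (2 * Real.sqrt 2 * r))
    (hβ : β = Real.sqrt 2 * Real.cot (Real.sqrt 2 * r))
    (hlam : lam = -(Real.sqrt 2) * Real.tan (Real.sqrt 2 * r))
    (hh : h = α + 2 * β + (2 * (m : ℝ) - 2) * lam)
    (hδ : δ = 4 * (m : ℝ) + h * α - α ^ 2)
    (hσ : σ = 4 * (m : ℝ) + 6 + h * β - β ^ 2)
    (hτ : τ = 4 * (m : ℝ) + 6 + h * lam - lam ^ 2) :
    ¬ (δ = σ ∧ τ = δ) := by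
  rintro ⟨h1, h2⟩
  set t : ℝ := Real.sqrt 2 * r with htdef
  have hs2 : (0:ℝ) < Real.sqrt 2 := Real.sqrt_pos.mpr (by norm_num)
  have hsq : Real.sqrt 2 * Real.sqrt 2 = 2 := Real.mul_self_sqrt (by norm_num)
  have ht0 : 0 < t := mul_pos hs2 hr0
  have ht1 : t < Real.pi / 2 := by
    have : Real.sqrt 2 * r < Real.sqrt 2 * (Real.pi / (2 * Real.sqrt 2)) :=
      mul_lt_mul_of_pos_left hr1 hs2
    calc t < Real.sqrt 2 * (Real.pi / (2 * Real.sqrt 2)) := this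
      _ = Real.pi / 2 := by field_simp
  have hcos : 0 < Real.cos t :=
    Real.cos_pos_of_mem_Ioo ⟨by linarith [Real.pi_pos], ht1⟩
  have hsin : 0 < Real.sin t :=
    Real.sin_pos_of_pos_of_lt_pi ht0 (lt_trans ht1 (by linarith [Real.pi_pos]))
  have hsn := hsin.ne'
  have hcn := hcos.ne'
  -- β * lam = -2
  have hbl : β * lam = -2 := by
    rw [hβ, hlam, Real.cot_eq_cos_div_sin, Real.tan_eq_sin_div_cos]
    field_simp
    linear_combination -hsq
  -- α = β + lam
  have hpyth : Real.sin t ^ 2 + Real.cos t ^ 2 = 1 := Real.sin_sq_add_cos_sq t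
  have halbl : α = β + lam := by
    have h2t : 2 * Real.sqrt 2 * r = 2 * t := by rw [htdef]; ring
    rw [hα, hβ, hlam, h2t, Real.cot_eq_cos_div_sin, Real.cot_eq_cos_div_sin,
      Real.tan_eq_sin_div_cos, Real.cos_two_mul, Real.sin_two_mul]
    have hs2t : (2:ℝ) * Real.sin t * Real.cos t ≠ 0 := by positivity
    field_simp
    linear_combination hpyth
  -- β > 0 > lam, so β ≠ lam
  have hbpos : 0 < β := by
    rw [hβ, Real.cot_eq_cos_div_sin]; positivity
  have hlneg : lam < 0 := by
    rw [hlam, Real.tan_eq_sin_div_cos]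
    have : 0 < Real.sin t / Real.cos t := by positivity
    nlinarith
  -- From δ = σ and τ = δ, derive h*lam - lam^2 = 2 and h*β - β^2 = 2
  have E1 : h * lam - lam ^ 2 = 2 := by
    rw [hδ, hσ, halbl] at h1
    linear_combination h1 + 2 * hbl
  have E2 : h * β - β ^ 2 = 2 := by
    rw [hδ, hτ, halbl] at h2
    linear_combination -h2 + 2 * hbl
  have hne : lam - β ≠ 0 := sub_ne_zero.mpr (ne_of_lt (hlneg.trans hbpos))
  have hfac : (lam - β) * (h - lam - β) = 0 := by linear_combination E1 - E2
  have hh' : h = lam + β := by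
    rcases mul_eq_zero.mp hfac with hc | hc
    · exact absurd hc hne
    · linarith
  -- Then h*lam - lam^2 = β*lam = -2 ≠ 2
  rw [hh'] at E1
  have : β * lam = 2 := by linear_combination E1
  linarith
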